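/- Kelvin transform identity for the vector system: let N ∈ ℝᵐ, x₁,…,x_p distinct points all different from N, y_i' = (x_i - N)/|x_i - N|², v_i = |y_i'| u_i. If (u₁,…,u_p) satisfies both Σ_{j≠i} u_j/|x_i - x_j| = 0 and u_i Σ_{j≠i} (x_i - x_j)/|x_i - x_j|³ · u_j = 0 for all i, then (v₁,…,v_p) satisfies Σ_{j≠i} v_j/|y_i' - y_j'| = 0 and v_i Σ_{j≠i} (y_i' - y_j')/|y_i' - y_j'|³ · v_j = 0 for all i. -/

import Mathlib

set_option maxHeartbeats 1000000

open Finset in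
theorem stmt_14 (m p : ℕ) (N : EuclideanSpace ℝ (Fin m))
    (x : Fin p → EuclideanSpace ℝ (Fin m))
    (hinj : Function.Injective x) (hN : ∀ i, x i ≠ N)
    (y : Fin p → EuclideanSpace ℝ (Fin m))
    (hy : ∀ i, y i = (‖x i - N‖ ^ 2)⁻¹ • (x i - N))
    (u v : Fin p → ℝ) (hv : ∀ i, v i = ‖y i‖ * u i)
    (h1 : ∀ i, ∑ j ∈ univ \ {i}, u j / ‖x i - x j‖ = 0)
    (h2 : ∀ i, u i • ∑ j ∈ univ \ {i},
        (u j / ‖x i - x j‖ ^ 3) • (x i - x j) = 0) :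
    (∀ i, ∑ j ∈ univ \ {i}, v j / ‖y i - y j‖ = 0) ∧
    (∀ i, v i • ∑ j ∈ univ \ {i},
        (v j / ‖y i - y j‖ ^ 3) • (y i - y j) = 0) := by
  have ha : ∀ i, 0 < ‖x i - N‖ := fun i => by
    simpa [sub_eq_zero] using hN i
  have hxx : ∀ i j, i ≠ j → 0 < ‖x i - x j‖ := fun i j hij => by
    have : x i ≠ x j := fun h => hij (hinj h)
    simpa [sub_eq_zero] using this
  set a : Fin p → ℝ := fun i => ‖x i - N‖ with ha_def
  -- norm of y i
  have hny : ∀ i, ‖y i‖ = (a i)⁻¹ := by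
    intro i
    rw [hy i, norm_smul, norm_inv, norm_pow, norm_norm]
    have := (ha i).ne'
    field_simp [pow_two]
    exact (div_self this).symm
  have hvv : ∀ i, v i = (a i)⁻¹ * u i := fun i => by rw [hv i, hny i]
  have hy' : ∀ k, y k = (a k ^ 2)⁻¹ • (x k - N) := fun k => hy k
  -- distance formula
  have hd : ∀ i j, i ≠ j → ‖y i - y j‖ = ‖x i - x j‖ / (a i * a j) := by
    intro i j hij
    have hsq : ‖y i - y j‖ ^ 2 = (‖x i - x j‖ / (a i * a j)) ^ 2 := by
      have e1 : ‖y i - y j‖ ^ 2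
          = ‖y i‖ ^ 2 - 2 * (inner ℝ (y i) (y j) : ℝ) + ‖y j‖ ^ 2 := norm_sub_sq_real _ _
      have e2 : ‖x i - x j‖ ^ 2
          = a i ^ 2 - 2 * (inner ℝ (x i - N) (x j - N) : ℝ) + a j ^ 2 := by
        have : x i - x j = (x i - N) - (x j - N) := by abel
        rw [this, norm_sub_sq_real]
      have e3 : (inner ℝ (y i) (y j) : ℝ)
          = (a i ^ 2)⁻¹ * ((a j ^ 2)⁻¹ * (inner ℝ (x i - N) (x j - N) : ℝ)) := by
        rw [hy i, hy j, real_inner_smul_left, real_inner_smul_right]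
      rw [e1, e3, hny i, hny j, div_pow, e2]
      have hi : a i ≠ 0 := (ha i).ne'
      have hj : a j ≠ 0 := (ha j).ne'
      field_simp
      ring
    have h1' : 0 ≤ ‖y i - y j‖ := norm_nonneg _
    have h2' : 0 ≤ ‖x i - x j‖ / (a i * a j) :=
      div_nonneg (norm_nonneg _) (by positivity)
    rw [sq_eq_sq_iff_abs_eq_abs, abs_of_nonneg h1', abs_of_nonneg h2'] at hsq
    exact hsq
  constructor
  · intro i
    have : ∀ j ∈ univ \ {i}, v j / ‖y i - y j‖ = a i * (u j / ‖x i - x j‖) := by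
      intro j hj
      have hij : i ≠ j := by
        simp only [mem_sdiff, mem_singleton] at hj
        exact fun h => hj.2 h.symm
      rw [hd i j hij, hvv j]
      have hi := (ha i).ne'
      have hj' := (ha j).ne'
      have hn := (hxx i j hij).ne'
      field_simp
      rw [mul_assoc, mul_div_cancel_left₀ _ (show a j ≠ 0 from hj')]
    rw [Finset.sum_congr rfl this, ← Finset.mul_sum, h1 i, mul_zero]
  · intro i
    set T : EuclideanSpace ℝ (Fin m) :=
      ∑ j ∈ univ \ {i}, (u j / ‖x i - x j‖ ^ 3) • (x i - x j) with hT
    set w : EuclideanSpace ℝ (Fin m) := x i - N with hw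
    have hdecomp : ∑ j ∈ univ \ {i}, (v j / ‖y i - y j‖ ^ 3) • (y i - y j)
        = (a i ^ 3) • T
          + ((a i * ∑ j ∈ univ \ {i}, u j / ‖x i - x j‖
              - 2 * a i * (inner ℝ (w) (T) : ℝ))) • w := by
      rw [hT, Finset.smul_sum, Finset.mul_sum, inner_sum, Finset.mul_sum,
        ← Finset.sum_sub_distrib, Finset.sum_smul, ← Finset.sum_add_distrib]
      refine Finset.sum_congr rfl ?_
      intro j hj
      have hij : i ≠ j := by
        simp only [mem_sdiff, mem_singleton] at hj
        exact fun h => hj.2 h.symm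
      have hi := ha i
      have hj' := ha j
      have hn := hxx i j hij
      have hq : (inner ℝ (w) (x i - x j) : ℝ)
          = (a i ^ 2 + ‖x i - x j‖ ^ 2 - a j ^ 2) / 2 := by
        have e2 : ‖x i - x j‖ ^ 2
            = a i ^ 2 - 2 * (inner ℝ (x i - N) (x j - N) : ℝ) + a j ^ 2 := by
          have : x i - x j = (x i - N) - (x j - N) := by abel
          rw [this, norm_sub_sq_real]
        have e3 : (inner ℝ (w) (x i - x j) : ℝ) = a i ^ 2 - (inner ℝ (x i - N) (x j - N) : ℝ) := by
          have hsplit : x i - x j = (x i - N) - (x j - N) := by abel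
          rw [hw, hsplit, inner_sub_right, real_inner_self_eq_norm_sq]
        rw [e3]
        linarith [e2]
      rw [real_inner_smul_right, hq, hd i j hij, hvv j]
      have hyij : y i - y j = (a j ^ 2)⁻¹ • (x i - x j)
          + ((a i ^ 2)⁻¹ - (a j ^ 2)⁻¹) • (x i - N) := by
        rw [hy' i, hy' j]
        have hsplit : x j - N = (x i - N) - (x i - x j) := by abel
        rw [hsplit]
        module
      rw [hyij, hw]
      have hi' : a i ≠ 0 := hi.ne'
      have hj'' : a j ≠ 0 := hj'.ne'
      have hn' := hn.ne'
      have hn2 : ‖x i - x j‖ ^ 2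
          = a i ^ 2 - 2 * (inner ℝ (x i - N) (x j - N) : ℝ) + a j ^ 2 := by
        have : x i - x j = (x i - N) - (x j - N) := by abel
        rw [this, norm_sub_sq_real]
      match_scalars <;> field_simp <;> ring
    have hT0 : u i • T = 0 := h2 i
    have hinner : (inner ℝ w T : ℝ) * u i = 0 := by
      have : (inner ℝ w (u i • T) : ℝ) = 0 := by rw [hT0, inner_zero_right]
      rw [real_inner_smul_right] at this
      linarith [this]
    rw [hdecomp, smul_add, smul_smul, smul_smul, h1 i, mul_zero, zero_sub]
    have hvi : v i * a i ^ 3 = a i ^ 2 * u i := by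
      rw [hvv i]; field_simp [(ha i).ne']
    have havi : a i * v i = u i := by
      rw [hvv i]; field_simp [(ha i).ne']
      exact mul_div_cancel_left₀ _ (ha i).ne'
    have hvi2 : v i * -(2 * a i * (inner ℝ w T : ℝ)) = 0 := by
      have e : v i * -(2 * a i * (inner ℝ w T : ℝ))
          = -(2 * (a i * v i * (inner ℝ w T : ℝ))) := by ring
      rw [e, havi, mul_comm (u i) ((inner ℝ w T : ℝ)), hinner, mul_zero, neg_zero]
    rw [hvi, hvi2, zero_smul, add_zero, mul_smul, hT0, smul_zero]
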